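/- Let A be a measurable set and set F*(A) = F(A) ∩ Aᶜ and P*(A) = P(A) ∩ Aᶜ. The following are equivalent: (i) A is T-convex; (ii) F*(A) ∩ P*(A) = ∅ a.e.; (iii) F*(A) is T-invariant; (iv) P*(A) is T-co-invariant; (v) there exist a T-invariant set B and a T-co-invariant set C with A = B ∩ C a.e. -/

import Mathlib

open MeasureTheory ENNReal Filter Set

noncomputable section

namespace PaperAtoms

variable {Ω : Type*} [MeasurableSpace Ω] {μ : MeasureTheory.Measure Ω} {p : ℝ≥0∞} [Fact (1 ≤ p)]

/-- `T` is a positive operator on `Lp`. -/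
def IsPositiveOp (T : Lp ℝ p μ →L[ℝ] Lp ℝ p μ) : Prop :=
  ∀ f : Lp ℝ p μ, 0 ≤ f → 0 ≤ T f

/-- A measurable set `A` is `T`-invariant if `T f` vanishes a.e. on `Aᶜ` for every
nonnegative `f ∈ Lp` vanishing a.e. on `Aᶜ`. -/
def Invariant (T : Lp ℝ p μ →L[ℝ] Lp ℝ p μ) (A : Set Ω) : Prop :=
  MeasurableSet A ∧
    ∀ f : Lp ℝ p μ, 0 ≤ f → (∀ᵐ x ∂μ, x ∉ A → f x = 0) → ∀ᵐ x ∂μ, x ∉ A → T f x = 0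

/-- `A` is `T`-co-invariant if `Aᶜ` is `T`-invariant. -/
def CoInvariant (T : Lp ℝ p μ →L[ℝ] Lp ℝ p μ) (A : Set Ω) : Prop :=
  Invariant T Aᶜ

/-- `A` is `T`-admissible if it belongs to the σ-field generated by the `T`-invariant sets. -/
def Admissible (T : Lp ℝ p μ →L[ℝ] Lp ℝ p μ) (A : Set Ω) : Prop :=
  MeasurableSet[MeasurableSpace.generateFrom {B : Set Ω | Invariant T B}] A

/-- A `T`-atom is a minimal `T`-admissible set with positive measure. -/
def Atom (T : Lp ℝ p μ →L[ℝ] Lp ℝ p μ) (A : Set Ω) : Prop :=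
  Admissible T A ∧ 0 < μ A ∧
    ∀ B : Set Ω, Admissible T B → B ≤ᵐ[μ] A → μ B = 0 ∨ B =ᵐ[μ] A

/-- `FA` is (a version of) the future of `A`: the minimal `T`-invariant set containing `A` a.e. -/
def IsFuture (T : Lp ℝ p μ →L[ℝ] Lp ℝ p μ) (A FA : Set Ω) : Prop :=
  Invariant T FA ∧ A ≤ᵐ[μ] FA ∧
    ∀ B : Set Ω, Invariant T B → A ≤ᵐ[μ] B → FA ≤ᵐ[μ] B

/-- `PA` is (a version of) the past of `A`: the minimal `T`-co-invariant set containing `A` a.e. -/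
def IsPast (T : Lp ℝ p μ →L[ℝ] Lp ℝ p μ) (A PA : Set Ω) : Prop :=
  CoInvariant T PA ∧ A ≤ᵐ[μ] PA ∧
    ∀ B : Set Ω, CoInvariant T B → A ≤ᵐ[μ] B → PA ≤ᵐ[μ] B

/-- `A` is `T`-convex if `A = F(A) ∩ P(A)` a.e. -/
def Convexe (T : Lp ℝ p μ →L[ℝ] Lp ℝ p μ) (A : Set Ω) : Prop :=
  MeasurableSet A ∧
    ∃ FA PA : Set Ω, IsFuture T A FA ∧ IsPast T A PA ∧ A =ᵐ[μ] (FA ∩ PA : Set Ω)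

/-- Multiplication by the indicator function of `A`, as a bounded operator on `Lp`
(defined as `0` if `A` is not measurable). -/
def indicatorCLM (μ : MeasureTheory.Measure Ω) (p : ℝ≥0∞) [Fact (1 ≤ p)] (A : Set Ω) :
    Lp ℝ p μ →L[ℝ] Lp ℝ p μ := by
  classical
  exact if hA : MeasurableSet A then
    LinearMap.mkContinuous
      { toFun := fun f => ((Lp.memLp f).indicator hA).toLp (A.indicator f)
        map_add' := fun f g => by
          have hf : MemLp (A.indicator f) p μ := (Lp.memLp f).indicator hA
          have hg : MemLp (A.indicator g) p μ := (Lp.memLp g).indicator hA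
          rw [← MemLp.toLp_add hf hg]
          refine MemLp.toLp_congr _ _ ?_
          filter_upwards [Lp.coeFn_add f g] with x hx
          rw [Pi.add_apply, Set.indicator_apply, Set.indicator_apply, Set.indicator_apply, hx]
          split_ifs <;> simp
        map_smul' := fun c f => by
          have hf : MemLp (A.indicator f) p μ := (Lp.memLp f).indicator hA
          rw [RingHom.id_apply, ← MemLp.toLp_const_smul c hf]
          refine MemLp.toLp_congr _ _ ?_
          filter_upwards [Lp.coeFn_smul c f] with x hx
          rw [Pi.smul_apply, Set.indicator_apply, Set.indicator_apply, hx]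
          split_ifs <;> simp }
      1
      (fun f => by
        simp only [LinearMap.coe_mk, AddHom.coe_mk, one_mul]
        rw [Lp.norm_toLp, Lp.norm_def]
        exact ENNReal.toReal_mono (Lp.eLpNorm_ne_top f) (eLpNorm_indicator_le _))
  else 0

/-- The restriction `T_A = 1_A T 1_A` of `T` to a measurable set `A`. -/
def restrictOp (T : Lp ℝ p μ →L[ℝ] Lp ℝ p μ) (A : Set Ω) : Lp ℝ p μ →L[ℝ] Lp ℝ p μ :=
  (indicatorCLM μ p A).comp (T.comp (indicatorCLM μ p A))

/-- The spectral radius of a bounded operator, via Gelfand's formula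
`ρ(T) = inf_n ‖Tⁿ‖^(1/n) = lim_n ‖Tⁿ‖^(1/n)`. -/
def specRadius (T : Lp ℝ p μ →L[ℝ] Lp ℝ p μ) : ℝ :=
  ⨅ n : ℕ, ‖T ^ (n + 1)‖ ^ (((n : ℝ) + 1)⁻¹)

/-- The spectral radius `ρ(A)` of the restriction of `T` to `A`. -/
def rhoSet (T : Lp ℝ p μ →L[ℝ] Lp ℝ p μ) (A : Set Ω) : ℝ :=
  specRadius (restrictOp T A)

/-- A measurable set `A` with `μ A > 0` is `T`-irreducible if the restriction of `T` to `A`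
is irreducible, i.e. every `T_A`-invariant subset of `A` is a.e. trivial. -/
def Irreducible (T : Lp ℝ p μ →L[ℝ] Lp ℝ p μ) (A : Set Ω) : Prop :=
  MeasurableSet A ∧ 0 < μ A ∧
    ∀ B : Set Ω, Invariant (restrictOp T A) B → B ≤ᵐ[μ] A → μ B = 0 ∨ B =ᵐ[μ] A

/-- `T` is power compact if some power `T^k`, `k ≥ 1`, is a compact operator. -/
def PowerCompact (T : Lp ℝ p μ →L[ℝ] Lp ℝ p μ) : Prop :=
  ∃ k : ℕ, 1 ≤ k ∧ IsCompactOperator (⇑(T ^ k))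

/-- `B ≼ A` for atoms: `B ⊆ F(A)` a.e. -/
def Prec (T : Lp ℝ p μ →L[ℝ] Lp ℝ p μ) (B A : Set Ω) : Prop :=
  ∃ FA : Set Ω, IsFuture T A FA ∧ B ≤ᵐ[μ] FA

/-- `B ≺ A` for atoms: `B ⊆ F(A)` a.e. and `B ≠ A` a.e. -/
def PrecStrict (T : Lp ℝ p μ →L[ℝ] Lp ℝ p μ) (B A : Set Ω) : Prop :=
  Prec T B A ∧ ¬ (B =ᵐ[μ] A)

/-- A critical atom: a `T`-atom whose spectral radius equals that of `T`. -/
def CriticalAtom (T : Lp ℝ p μ →L[ℝ] Lp ℝ p μ) (A : Set Ω) : Prop :=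
  Atom T A ∧ rhoSet T A = specRadius T

/-- There is a chain `A = A_0 ≻ A_1 ≻ ⋯ ≻ A_n` of critical atoms starting at `A`. -/
def ChainFrom (T : Lp ℝ p μ →L[ℝ] Lp ℝ p μ) (A : Set Ω) (n : ℕ) : Prop :=
  ∃ c : ℕ → Set Ω, c 0 = A ∧ (∀ i ≤ n, CriticalAtom T (c i)) ∧
    ∀ i < n, PrecStrict T (c (i + 1)) (c i)

/-- The generalized eigenspace `⋃ₖ ker (T - λ id)^k` of `T` at `λ`. -/
def genEigenspace (T : Lp ℝ p μ →L[ℝ] Lp ℝ p μ) (l : ℝ) : Submodule ℝ (Lp ℝ p μ) :=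
  ⨆ k : ℕ, LinearMap.ker ((T - l • (1 : Lp ℝ p μ →L[ℝ] Lp ℝ p μ)) ^ k).toLinearMap

/-- The algebraic multiplicity of `λ` for `T`. -/
def algMult (T : Lp ℝ p μ →L[ℝ] Lp ℝ p μ) (l : ℝ) : ℕ :=
  Module.finrank ℝ ↥(genEigenspace T l)

/-- The set of `k` at which the kernels of `(T - ρ(T) id)^k` stabilize; the ascent of `T`
at `ρ(T)` is its infimum. -/
def ascentSet (T : Lp ℝ p μ →L[ℝ] Lp ℝ p μ) : Set ℕ :=
  {k : ℕ | LinearMap.ker ((T - specRadius T • (1 : Lp ℝ p μ →L[ℝ] Lp ℝ p μ)) ^ k).toLinearMap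
      = LinearMap.ker ((T - specRadius T • (1 : Lp ℝ p μ →L[ℝ] Lp ℝ p μ)) ^ (k + 1)).toLinearMap}

/-- `D` is (a version of) the set `T(C)`, i.e. the support of `T(1_C f)` for any a.e.
positive `f ∈ Lp`. -/
def IsImage (T : Lp ℝ p μ →L[ℝ] Lp ℝ p μ) (C D : Set Ω) : Prop :=
  MeasurableSet C ∧ MeasurableSet D ∧
    ∀ f : Lp ℝ p μ, (∀ᵐ x ∂μ, 0 < f x) →
      D =ᵐ[μ] ({x | T (indicatorCLM μ p C f) x ≠ 0} : Set Ω)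

/-- `D` is (a version of) the `k`-fold iterated image `T^k(C)`. -/
def IsIterImage (T : Lp ℝ p μ →L[ℝ] Lp ℝ p μ) : ℕ → Set Ω → Set Ω → Prop
  | 0, C, D => D = C
  | (k + 1), C, D => ∃ E : Set Ω, IsIterImage T k C E ∧ IsImage T E D

variable {Ω : Type*} [MeasurableSpace Ω] {μ : MeasureTheory.Measure Ω} {p : ℝ≥0∞}

section AuxLemmas

variable {Ω' : Type*} [MeasurableSpace Ω'] {ν : MeasureTheory.Measure Ω'} {q : ℝ≥0∞} [Fact (1 ≤ q)]

lemma coeFn_indicatorCLM' {B : Set Ω'} (hB : MeasurableSet B) (f : Lp ℝ q ν) :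
    ⇑(indicatorCLM ν q B f) =ᵐ[ν] B.indicator ⇑f := by
  unfold indicatorCLM
  rw [dif_pos hB]
  simp only [LinearMap.mkContinuous_apply, LinearMap.coe_mk, AddHom.coe_mk]
  exact MemLp.coeFn_toLp _

lemma invariant_union {T : Lp ℝ q ν →L[ℝ] Lp ℝ q ν} {B C : Set Ω'}
    (hB : Invariant T B) (hC : Invariant T C) : Invariant T (B ∪ C) := by
  refine ⟨hB.1.union hC.1, fun f hf hsupp => ?_⟩
  set h := indicatorCLM ν q B f with hh
  have hco : ⇑h =ᵐ[ν] B.indicator ⇑f := coeFn_indicatorCLM' hB.1 f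
  have hfpos : 0 ≤ᵐ[ν] ⇑f := (Lp.coeFn_nonneg f).mpr hf
  have hgco : ⇑(f - h) =ᵐ[ν] ⇑f - ⇑h := Lp.coeFn_sub f h
  have hpos : 0 ≤ h := by
    rw [← Lp.coeFn_nonneg]
    filter_upwards [hco, hfpos] with x h1 h2
    rw [Pi.zero_apply] at h2 ⊢
    rw [h1]
    by_cases hx : x ∈ B <;> simp [Set.indicator_apply, hx, h2]
  have hgpos : 0 ≤ f - h := by
    rw [← Lp.coeFn_nonneg]
    filter_upwards [hgco, hco, hfpos] with x h1 h2 h3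
    rw [Pi.zero_apply] at h3 ⊢
    rw [h1, Pi.sub_apply, h2]
    by_cases hx : x ∈ B <;> simp [Set.indicator_apply, hx, h3]
  have hvanB : ∀ᵐ x ∂ν, x ∉ B → h x = 0 := by
    filter_upwards [hco] with x h1 hx
    rw [h1, Set.indicator_of_notMem hx]
  have hvanC : ∀ᵐ x ∂ν, x ∉ C → (f - h) x = 0 := by
    filter_upwards [hgco, hco, hsupp] with x h1 h2 h3 hx
    rw [h1, Pi.sub_apply, h2]
    by_cases hxB : x ∈ B
    · simp [Set.indicator_of_mem hxB]
    · have : f x = 0 := h3 (fun hm => hm.elim hxB hx)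
      simp [Set.indicator_of_notMem hxB, this]
  have hTh := hB.2 h hpos hvanB
  have hTg := hC.2 (f - h) hgpos hvanC
  have hsum : T f = T h + T (f - h) := by
    rw [← map_add]; congr 1; abel
  have hcoe : ⇑(T f) =ᵐ[ν] ⇑(T h) + ⇑(T (f - h)) := by
    rw [hsum]; exact Lp.coeFn_add (T h) (T (f - h))
  filter_upwards [hcoe, hTh, hTg] with x h1 h2 h3 hx
  rw [h1, Pi.add_apply, h2 (fun hxB => hx (Or.inl hxB)),
    h3 (fun hxC => hx (Or.inr hxC)), add_zero]

end AuxLemmas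

theorem statement10 [SigmaFinite μ] (hμ : μ Set.univ ≠ 0) [Fact (1 ≤ p)]
    (hp : 1 < p) (hp' : p ≠ ∞)
    (T : Lp ℝ p μ →L[ℝ] Lp ℝ p μ) (hT : IsPositiveOp T)
    (A : Set Ω) (hA : MeasurableSet A) (FA PA : Set Ω)
    (hFA : IsFuture T A FA) (hPA : IsPast T A PA) :
    List.TFAE
      [ Convexe T A,
        μ ((FA ∩ Aᶜ) ∩ (PA ∩ Aᶜ)) = 0,
        Invariant T (FA ∩ Aᶜ),
        CoInvariant T (PA ∩ Aᶜ),
        ∃ B C : Set Ω, Invariant T B ∧ CoInvariant T C ∧ A =ᵐ[μ] (B ∩ C : Set Ω) ] := by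
  have hFmeas : MeasurableSet FA := hFA.1.1
  have hPmeas : MeasurableSet PA := by
    have := hPA.1.1.compl; rwa [compl_compl] at this
  have hAFimp : ∀ᵐ x ∂μ, x ∈ A → x ∈ FA := hFA.2.1
  have hAPimp : ∀ᵐ x ∂μ, x ∈ A → x ∈ PA := hPA.2.1
  tfae_have 1 → 2 := by
    rintro ⟨-, F', P', hF', hP', hAeq⟩
    have hF1 : FA ≤ᵐ[μ] F' := hFA.2.2 F' hF'.1 hF'.2.1
    have hP1 : PA ≤ᵐ[μ] P' := hPA.2.2 P' hP'.1 hP'.2.1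
    rw [Filter.eventuallyEq_set] at hAeq
    rw [measure_eq_zero_iff_ae_notMem]
    filter_upwards [hF1, hP1, hAeq] with x h1 h2 h3 hx
    exact hx.1.2 (h3.mpr ⟨h1 hx.1.1, h2 hx.2.1⟩)
  tfae_have 2 → 3 := by
    intro h2
    refine ⟨hFmeas.inter hA.compl, fun f hf hsupp => ?_⟩
    have hnull : ∀ᵐ x ∂μ, x ∉ (FA ∩ Aᶜ) ∩ (PA ∩ Aᶜ) := measure_eq_zero_iff_ae_notMem.mp h2
    have hvF : ∀ᵐ x ∂μ, x ∉ FA → f x = 0 := by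
      filter_upwards [hsupp] with x h1 hx
      exact h1 (fun hmem => hx hmem.1)
    have hvP : ∀ᵐ x ∂μ, x ∉ PAᶜ → f x = 0 := by
      filter_upwards [hsupp, hnull] with x h1 h2' hx
      rw [Set.notMem_compl_iff] at hx
      exact h1 (fun hmem => h2' ⟨hmem, hx, hmem.2⟩)
    have hTF := hFA.1.2 f hf hvF
    have hTP := hPA.1.2 f hf hvP
    filter_upwards [hTF, hTP, hAPimp] with x h1 h2' h3 hx
    by_cases hxF : x ∈ FA
    · have hxA : x ∈ A := by by_contra h; exact hx ⟨hxF, h⟩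
      exact h2' (Set.notMem_compl_iff.mpr (h3 hxA))
    · exact h1 hxF
  tfae_have 3 → 2 := by
    intro h3
    have hco : CoInvariant T (FA ∩ Aᶜ)ᶜ := by
      unfold CoInvariant; rwa [compl_compl]
    have hsub : A ≤ᵐ[μ] (((FA ∩ Aᶜ)ᶜ : Set Ω) : Set Ω) :=
      Filter.Eventually.of_forall fun x hx hmem => hmem.2 hx
    have hPsub := hPA.2.2 _ hco hsub
    rw [measure_eq_zero_iff_ae_notMem]
    filter_upwards [hPsub] with x h1 hx
    exact (h1 hx.2.1) hx.1
  tfae_have 2 → 4 := by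
    intro h2
    have hnull := measure_eq_zero_iff_ae_notMem.mp h2
    have hU : Invariant T (PAᶜ ∪ FA) := invariant_union hPA.1 hFA.1
    refine ⟨(hPmeas.inter hA.compl).compl, fun f hf hsupp => ?_⟩
    have hv : ∀ᵐ x ∂μ, x ∉ PAᶜ ∪ FA → f x = 0 := by
      filter_upwards [hsupp, hAFimp] with x h1 h3 hx
      have hxP : x ∈ PA := not_not.mp (fun h => hx (Or.inl h))
      have hxF : x ∉ FA := fun h => hx (Or.inr h)
      have hxA : x ∉ A := fun h => hxF (h3 h)
      exact h1 (fun hc => hc ⟨hxP, hxA⟩)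
    have hT := hU.2 f hf hv
    filter_upwards [hT, hnull] with x h1 h2' hx
    rw [Set.notMem_compl_iff] at hx
    by_cases hxF : x ∈ FA
    · exact absurd ⟨⟨hxF, hx.2⟩, hx⟩ h2'
    · exact h1 (fun hm => hm.elim (fun hp => hp hx.1) hxF)
  tfae_have 4 → 2 := by
    intro h4
    have hsub : A ≤ᵐ[μ] (((PA ∩ Aᶜ)ᶜ : Set Ω) : Set Ω) :=
      Filter.Eventually.of_forall fun x hx hmem => hmem.2 hx
    have hFsub := hFA.2.2 _ h4 hsub
    rw [measure_eq_zero_iff_ae_notMem]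
    filter_upwards [hFsub] with x h1 hx
    exact h1 hx.1.1 hx.2
  tfae_have 2 → 5 := by
    intro h2
    refine ⟨FA, PA, hFA.1, hPA.1, ?_⟩
    rw [Filter.eventuallyEq_set]
    filter_upwards [measure_eq_zero_iff_ae_notMem.mp h2, hAFimp, hAPimp] with x h1 h2' h3
    constructor
    · exact fun hx => ⟨h2' hx, h3 hx⟩
    · intro hx
      by_contra hxA
      exact h1 ⟨⟨hx.1, hxA⟩, hx.2, hxA⟩
  tfae_have 5 → 1 := by
    rintro ⟨B, C, hB, hC, hAeq⟩
    refine ⟨hA, FA, PA, hFA, hPA, ?_⟩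
    rw [Filter.eventuallyEq_set] at hAeq ⊢
    have hAB : A ≤ᵐ[μ] B := by
      filter_upwards [hAeq] with x h hx; exact (h.mp hx).1
    have hAC : A ≤ᵐ[μ] C := by
      filter_upwards [hAeq] with x h hx; exact (h.mp hx).2
    have hFB := hFA.2.2 B hB hAB
    have hPC := hPA.2.2 C hC hAC
    filter_upwards [hAeq, hFB, hPC, hAFimp, hAPimp] with x h1 h2 h3 h4 h5
    constructor
    · exact fun hx => ⟨h4 hx, h5 hx⟩
    · exact fun hx => h1.mpr ⟨h2 hx.1, h3 hx.2⟩
  tfae_finish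

end PaperAtoms
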